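/- For all c, k ∈ ℕ, every (possibly infinite) graph that is c-quasi-isometric to a graph with linewidth at most k has a (k+1, 3c²)-centred line-decomposition. -/

import Mathlib

open SimpleGraph
open scoped ENNReal NNReal

/-- `φ` is a `q`-quasi-isometry from `G` to `H`:
`q⁻¹ · dist_G(u,v) − q ≤ dist_H(φ u, φ v) ≤ q · dist_G(u,v) + q` (distances taken in `ℝ≥0∞`,
where unreachable pairs have distance `∞`), and every vertex of `H` is within distance `q`
of the image of `φ`. -/
def IsQuasiIsometry {V W : Type} (q : ℕ) (G : SimpleGraph V) (H : SimpleGraph W)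
    (φ : V → W) : Prop :=
  (∀ u v : V, (G.edist u v : ℝ≥0∞) / q - q ≤ (H.edist (φ u) (φ v) : ℝ≥0∞)) ∧
  (∀ u v : V, (H.edist (φ u) (φ v) : ℝ≥0∞) ≤ q * (G.edist u v : ℝ≥0∞) + q) ∧
  (∀ x : W, ∃ v : V, (H.edist x (φ v) : ℝ≥0∞) ≤ q)

/-- `G` is `q`-quasi-isometric to `H`. -/
def QuasiIsometric {V W : Type} (q : ℕ) (G : SimpleGraph V) (H : SimpleGraph W) : Prop :=
  ∃ φ : V → W, IsQuasiIsometry q G H φ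

/-- `(T, β)` is a `T`-decomposition of `G`: every edge of `G` has both ends in some bag, and
for every vertex `v` of `G` the set of nodes whose bag contains `v` induces a non-empty
connected subgraph of `T`. -/
def IsTreeDecomp {X V : Type} (T : SimpleGraph X) (G : SimpleGraph V) (β : X → Set V) : Prop :=
  (∀ ⦃u v : V⦄, G.Adj u v → ∃ x : X, u ∈ β x ∧ v ∈ β x) ∧
  (∀ v : V, (T.induce {x : X | v ∈ β x}).Connected)

/-- `(L, β)` is an `L`-decomposition of `G` over the line (linearly ordered set) `L`:
every edge of `G` has both ends in some bag, and for every vertex `v` of `G` the set of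
points of `L` whose bag contains `v` is a non-empty interval of `L`. -/
def IsLineDecomp {L V : Type} [LinearOrder L] (G : SimpleGraph V) (β : L → Set V) : Prop :=
  (∀ ⦃u v : V⦄, G.Adj u v → ∃ x : L, u ∈ β x ∧ v ∈ β x) ∧
  (∀ v : V, {x : L | v ∈ β x}.Nonempty ∧ {x : L | v ∈ β x}.OrdConnected)

/-- `S` is `(k,d)`-centred in `G`: `S` can be partitioned into at most `k` sets, each of
weak diameter at most `d` in `G`. -/
def Centred {V : Type} (G : SimpleGraph V) (k d : ℕ) (S : Set V) : Prop :=
  ∃ P : Fin k → Set V,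
    (⋃ i, P i) = S ∧
    (∀ i j : Fin k, i ≠ j → Disjoint (P i) (P j)) ∧
    (∀ i : Fin k, ∀ u ∈ P i, ∀ v ∈ P i, G.edist u v ≤ (d : ℕ∞))

/-- The independence number of the subgraph of `G` induced by `S` is at most `k`. -/
def IndepAtMost {V : Type} (G : SimpleGraph V) (S : Set V) (k : ℕ) : Prop :=
  ∀ I ⊆ S, (∀ u ∈ I, ∀ v ∈ I, u ≠ v → ¬ G.Adj u v) → I.encard ≤ (k : ℕ∞)

/-- The domination number of the subgraph of `G` induced by `S` is at most `k`. -/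
def DomAtMost {V : Type} (G : SimpleGraph V) (S : Set V) (k : ℕ) : Prop :=
  ∃ D ⊆ S, D.encard ≤ (k : ℕ∞) ∧ ∀ v ∈ S, v ∉ D → ∃ u ∈ D, G.Adj v u

/-- `P` is a partition of the graph `G`: a collection of non-empty vertex sets, each inducing
a connected subgraph of `G`, such that every vertex lies in exactly one part. -/
def IsGraphPartition {V : Type} (G : SimpleGraph V) (P : Set (Set V)) : Prop :=
  (∀ A ∈ P, A.Nonempty) ∧
  (∀ A ∈ P, (G.induce A).Connected) ∧
  (∀ v : V, ∃! A, A ∈ P ∧ v ∈ A)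

/-- The quotient graph `G/P`: vertices are the parts of `P`, and distinct parts are adjacent
iff some vertex of one is adjacent in `G` to some vertex of the other. -/
def quotientGraph {V : Type} (G : SimpleGraph V) (P : Set (Set V)) : SimpleGraph P where
  Adj A B := A ≠ B ∧ ∃ a ∈ (A : Set V), ∃ b ∈ (B : Set V), G.Adj a b
  symm := by
    constructor
    rintro A B ⟨hne, a, ha, b, hb, hab⟩
    exact ⟨hne.symm, b, hb, a, ha, hab.symm⟩
  loopless := by constructor; rintro A ⟨hne, -⟩; exact hne rfl

/-- `sim_G(A) ≤ k`: every induced matching of `G` between `A` and its complement has at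
most `k` edges. -/
def SimAtMost {V : Type} (G : SimpleGraph V) (A : Set V) (k : ℕ) : Prop :=
  ∀ (m : ℕ) (a b : Fin m → V),
    Function.Injective a → Function.Injective b →
    (∀ i, a i ∈ A) → (∀ i, b i ∉ A) →
    (∀ i, G.Adj (a i) (b i)) →
    (∀ i j : Fin m, i ≠ j →
      ¬ G.Adj (a i) (a j) ∧ ¬ G.Adj (b i) (b j) ∧ ¬ G.Adj (a i) (b j)) →
    m ≤ k

/-- `G` has sim-width at most `k`: there is a branch-decomposition `(T, L)` — a subcubic
tree `T` together with a map `L` from the vertices of `G` to the leaves of `T` — such that,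
for every edge `ab` of `T`, the side of the associated vertex partition consisting of the
vertices mapped to the component of `T − ab` containing `a` satisfies `sim_G ≤ k`. -/
def SimWidthAtMost {V : Type} (G : SimpleGraph V) (k : ℕ) : Prop :=
  ∃ (X : Type) (T : SimpleGraph X) (L : V → X),
    T.IsTree ∧
    (∀ x : X, (T.neighborSet x).encard ≤ 3) ∧
    (∀ v : V, (T.neighborSet (L v)).encard = 1) ∧
    (∀ a b : X, T.Adj a b →
      SimAtMost G {v : V | (T.deleteEdges {s(a, b)}).Reachable (L v) a} k)


section Aux

open SimpleGraph

lemma side_iff {L : Type} [LinearOrder L] {s : Set L} (hs : s.OrdConnected) {z x y : L}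
    (hz : z ∉ s) (hx : x ∈ s) (hy : y ∈ s) : x < z ↔ y < z := by
  constructor
  · intro hxz
    by_contra hyz
    push_neg at hyz
    exact hz (hs.out hx hy ⟨hxz.le, hyz⟩)
  · intro hyz
    by_contra hxz
    push_neg at hxz
    exact hz (hs.out hy hx ⟨hyz.le, hxz⟩)

lemma edist_le_of_mem_support {W : Type} {H : SimpleGraph W} {a b u : W}
    (p : H.Walk a b) (hu : u ∈ p.support) : H.edist a u ≤ p.length := by
  haveI := Classical.decEq W
  calc H.edist a u ≤ ((p.takeUntil u hu).length : ℕ∞) := SimpleGraph.edist_le _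
    _ ≤ (p.length : ℕ∞) := by exact_mod_cast SimpleGraph.Walk.length_takeUntil_le p hu

lemma exists_walk_length_le {W : Type} {H : SimpleGraph W} {a b : W} {n : ℕ}
    (h : H.edist a b ≤ (n : ℕ∞)) : ∃ p : H.Walk a b, p.length ≤ n := by
  obtain ⟨p, hp⟩ := SimpleGraph.exists_walk_of_edist_ne_top
    (ne_top_of_le_ne_top (ENat.coe_ne_top n) h)
  refine ⟨p, ?_⟩
  have : (p.length : ℕ∞) ≤ (n : ℕ∞) := hp.le.trans h
  exact_mod_cast this

lemma exists_mid {W : Type} {H : SimpleGraph W} (s t : ℕ) :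
    ∀ {a b : W} (p : H.Walk a b), p.length ≤ s + t →
    ∃ m : W, H.edist a m ≤ (s : ℕ∞) ∧ H.edist m b ≤ (t : ℕ∞) := by
  induction s with
  | zero =>
    intro a b p hp
    refine ⟨a, by simp [SimpleGraph.edist_self], ?_⟩
    have hp' : p.length ≤ t := by omega
    have : (p.length : ℕ∞) ≤ (t : ℕ∞) := by exact_mod_cast hp'
    exact le_trans (SimpleGraph.edist_le p) this
  | succ s ih =>
    intro a b p hp
    cases p with
    | nil => exact ⟨a, by simp [SimpleGraph.edist_self], by simp [SimpleGraph.edist_self]⟩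
    | @cons _ a' _ h q =>
      obtain ⟨m, h1, h2⟩ := ih q (by simp [SimpleGraph.Walk.length_cons] at hp; omega)
      refine ⟨m, ?_, h2⟩
      calc H.edist a m ≤ H.edist a a' + H.edist a' m := SimpleGraph.edist_triangle
        _ ≤ 1 + (s : ℕ∞) := add_le_add (le_of_eq (SimpleGraph.edist_eq_one_iff_adj.mpr h)) h1
        _ = ((s + 1 : ℕ) : ℕ∞) := by rw [Nat.cast_add, Nat.cast_one, add_comm]

lemma walk_same_side {W L : Type} [LinearOrder L] {H : SimpleGraph W} {β : L → Set W}
    (hedge : ∀ ⦃u v : W⦄, H.Adj u v → ∃ x : L, u ∈ β x ∧ v ∈ β x)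
    (hconn : ∀ w : W, {x : L | w ∈ β x}.OrdConnected)
    {z : L} :
    ∀ {a b : W} (p : H.Walk a b), (∀ u ∈ p.support, z ∉ {x : L | u ∈ β x}) →
    ∀ x, a ∈ β x → ∀ y, b ∈ β y → (x < z ↔ y < z) := by
  intro a b p
  induction p with
  | nil =>
    intro hsup x hx y hy
    exact side_iff (hconn _) (hsup _ (SimpleGraph.Walk.start_mem_support _)) hx hy
  | @cons a a' b h q ih =>
    intro hsup x hx y hy
    obtain ⟨t, hta, htb⟩ := hedge h
    have h1 : x < z ↔ t < z :=
      side_iff (hconn _) (hsup _ (SimpleGraph.Walk.start_mem_support _)) hx hta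
    have h2 : t < z ↔ y < z :=
      ih (fun u hu => hsup u (by simp [SimpleGraph.Walk.support_cons, hu])) t htb y hy
    exact h1.trans h2

lemma div_le_aux {a : ℝ≥0∞} {c : ℕ} (h : a / (c : ℝ≥0∞) ≤ 3 * (c : ℝ≥0∞)) :
    a ≤ 3 * (c : ℝ≥0∞) ^ 2 := by
  rcases Nat.eq_zero_or_pos c with rfl | hc
  · have h0 : a / (0 : ℝ≥0∞) = 0 := le_antisymm (by simpa using h) zero_le
    rcases ENNReal.div_eq_zero_iff.mp h0 with ha | ha
    · simp [ha]
    · simp at ha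
  · have hc0 : (c : ℝ≥0∞) ≠ 0 := by exact_mod_cast hc.ne'
    have := (ENNReal.div_le_iff hc0 (ENNReal.natCast_ne_top c)).mp h
    calc a ≤ 3 * (c : ℝ≥0∞) * c := this
      _ = 3 * (c : ℝ≥0∞) ^ 2 := by ring

end Aux

/-- For all `c, k ∈ ℕ`, every (possibly infinite) graph that is
`c`-quasi-isometric to a graph with linewidth at most `k` has a `(k+1, 3c²)`-centred
line-decomposition. -/
theorem centredLineDecomp_of_quasiIsometric_boundedLinewidth
    (c k : ℕ) (V W : Type) (G : SimpleGraph V) (H : SimpleGraph W)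
    (hH : ∃ (L : Type) (instL : LinearOrder L) (β : L → Set W),
      @IsLineDecomp L W instL H β ∧ ∀ x : L, (β x).encard ≤ ((k + 1 : ℕ) : ℕ∞))
    (hQI : QuasiIsometric c G H) :
    ∃ (L : Type) (instL : LinearOrder L) (β : L → Set V),
      @IsLineDecomp L V instL G β ∧ ∀ x : L, Centred G (k + 1) (3 * c ^ 2) (β x) := by
  obtain ⟨Λ, instΛ, βH, ⟨hHe, hHv⟩, hcard⟩ := hH
  obtain ⟨φ, h1, h2, h3⟩ := hQI
  refine ⟨Λ, instΛ,
    fun x => {v : V | ∃ w, w ∈ βH x ∧ H.edist (φ v) w ≤ (c : ℕ∞)}, ⟨?_, ?_⟩, ?_⟩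
  · -- edge condition
    intro u v huv
    have hG1 : G.edist u v = 1 := SimpleGraph.edist_eq_one_iff_adj.mpr huv
    have hH2 : (H.edist (φ u) (φ v) : ℝ≥0∞) ≤ (((c + c : ℕ) : ℕ∞) : ℝ≥0∞) := by
      refine (h2 u v).trans ?_
      rw [hG1]
      push_cast
      rw [mul_one]
    have hle : H.edist (φ u) (φ v) ≤ ((c + c : ℕ) : ℕ∞) := by exact_mod_cast hH2
    obtain ⟨p, hp⟩ := exists_walk_length_le hle
    obtain ⟨m, hm1, hm2⟩ := exists_mid c c p hp
    obtain ⟨x, hx⟩ := (hHv m).1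
    exact ⟨x, ⟨m, hx, hm1⟩, ⟨m, hx, by rwa [SimpleGraph.edist_comm]⟩⟩
  · -- vertex condition
    intro v
    constructor
    · obtain ⟨x, hx⟩ := (hHv (φ v)).1
      exact ⟨x, φ v, hx, by simp [SimpleGraph.edist_self]⟩
    · constructor
      intro x hx y hy z hz
      by_cases hzU : z ∈ {x : Λ | ∃ w, w ∈ βH x ∧ H.edist (φ v) w ≤ (c : ℕ∞)}
      · exact hzU
      · exfalso
        obtain ⟨w1, hw1, hd1⟩ := hx
        obtain ⟨w2, hw2, hd2⟩ := hy
        obtain ⟨p1, hp1⟩ := exists_walk_length_le hd1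
        obtain ⟨p2, hp2⟩ := exists_walk_length_le hd2
        have hsup : ∀ u ∈ (p1.reverse.append p2).support, z ∉ {x : Λ | u ∈ βH x} := by
          intro u hu hzu
          have hmem : u ∈ p1.support ∨ u ∈ p2.support := by
            rw [SimpleGraph.Walk.mem_support_append_iff] at hu
            rcases hu with hu | hu
            · left; rwa [SimpleGraph.Walk.support_reverse, List.mem_reverse] at hu
            · right; exact hu
          have hdu : H.edist (φ v) u ≤ (c : ℕ∞) := by
            rcases hmem with hu | hu
            · exact (edist_le_of_mem_support p1 hu).trans (by exact_mod_cast hp1)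
            · exact (edist_le_of_mem_support p2 hu).trans (by exact_mod_cast hp2)
          exact hzU ⟨u, hzu, hdu⟩
        have hside := walk_same_side hHe (fun w => (hHv w).2) (p1.reverse.append p2)
          hsup x hw1 y hw2
        have hxz : x < z := lt_of_le_of_ne hz.1 (fun h => hzU (h ▸ ⟨w1, hw1, hd1⟩))
        have hzy : z < y := lt_of_le_of_ne hz.2 (fun h => hzU (h ▸ ⟨w2, hw2, hd2⟩))
        exact absurd (hside.mp hxz) (not_lt.mpr hzy.le)
  · -- centredness
    intro x
    have hfin := Set.encard_le_coe_iff_finite_ncard_le.mp (hcard x)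
    haveI : Fintype (βH x) := hfin.1.fintype
    have hcardle : Fintype.card (βH x) ≤ k + 1 := by
      rw [← Nat.card_eq_fintype_card, Nat.card_coe_set_eq]
      exact hfin.2
    set f : βH x → Fin (k + 1) :=
      fun w => Fin.castLE hcardle ((Fintype.equivFin (βH x)) w) with hf
    have hfinj : Function.Injective f :=
      (Fin.castLE_injective hcardle).comp (Fintype.equivFin (βH x)).injective
    refine ⟨fun i => {v : V |
      ∃ h : (∃ w, w ∈ βH x ∧ H.edist (φ v) w ≤ (c : ℕ∞)),
        f ⟨h.choose, h.choose_spec.1⟩ = i}, ?_, ?_, ?_⟩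
    · ext v
      simp only [Set.mem_iUnion, Set.mem_setOf_eq]
      constructor
      · rintro ⟨i, h, -⟩; exact h
      · intro h; exact ⟨f ⟨h.choose, h.choose_spec.1⟩, h, rfl⟩
    · intro i j hij
      rw [Set.disjoint_left]
      rintro v ⟨h, hi⟩ ⟨h', hj⟩
      exact hij (hi.symm.trans hj)
    · rintro i u ⟨hu, hui⟩ v ⟨hv, hvi⟩
      have hweq : (⟨hu.choose, hu.choose_spec.1⟩ : βH x)
          = ⟨hv.choose, hv.choose_spec.1⟩ := hfinj (hui.trans hvi.symm)
      have hw : hu.choose = hv.choose := congrArg Subtype.val hweq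
      have d1 : H.edist (φ u) hu.choose ≤ (c : ℕ∞) := hu.choose_spec.2
      have d2 : H.edist (φ v) hu.choose ≤ (c : ℕ∞) := by
        rw [hw]; exact hv.choose_spec.2
      have dH : H.edist (φ u) (φ v) ≤ (c : ℕ∞) + (c : ℕ∞) := by
        refine le_trans SimpleGraph.edist_triangle (add_le_add d1 ?_)
        rwa [SimpleGraph.edist_comm]
      have dH' : (H.edist (φ u) (φ v) : ℝ≥0∞) ≤ (c : ℝ≥0∞) + c := by
        exact_mod_cast ENat.toENNReal_mono dH
      have hdivsub : (G.edist u v : ℝ≥0∞) / c - c ≤ (c : ℝ≥0∞) + c := (h1 u v).trans dH'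
      have hdiv : (G.edist u v : ℝ≥0∞) / c ≤ 3 * (c : ℝ≥0∞) := by
        have := tsub_le_iff_right.mp hdivsub
        calc (G.edist u v : ℝ≥0∞) / c ≤ (c : ℝ≥0∞) + c + c := this
          _ = 3 * (c : ℝ≥0∞) := by ring
      have hfinal : (G.edist u v : ℝ≥0∞) ≤ 3 * (c : ℝ≥0∞) ^ 2 := div_le_aux hdiv
      have : (G.edist u v : ℝ≥0∞) ≤ (((3 * c ^ 2 : ℕ) : ℕ∞) : ℝ≥0∞) := by
        refine hfinal.trans (le_of_eq ?_)
        push_cast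
        ring
      exact_mod_cast this
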